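/- Let σ be the standard n-simplex and c a real-valued k-cochain on σ. Then Wc is the unique differential k-form ω on σ such that: (1) ω has affine coefficients; (2) the pullback of ω to every k-face τ of σ is a constant form; (3) ∫_τ ω = ⟨c, τ⟩ for every k-face τ. -/

import Mathlib

open MeasureTheory Finset

/-- A real-valued function on `ℝⁿ` is affine if it has the form `x ↦ ∑ aᵢ xⁱ + b`. -/
def IsAffineFn {n : ℕ} (f : (Fin n → ℝ) → ℝ) : Prop :=
  ∃ (a : Fin n → ℝ) (b : ℝ), ∀ x, f x = (∑ i, a i * x i) + b

/-- The standard `n`-simplex `{x : xⁱ ≥ 0, ∑ xⁱ ≤ 1}` in `ℝⁿ`. -/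
def stdSimp (n : ℕ) : Set (Fin n → ℝ) :=
  {x | (∀ i, 0 ≤ x i) ∧ (∑ i, x i) ≤ 1}

/-- The basic alternating `k`-form `dx^I` (for a strictly increasing multi-index given by a
`k`-element subset `I` of `{1,…,n}`) evaluated on `k` vectors. -/
def dxI {n k : ℕ} (I : {s : Finset (Fin n) // s.card = k}) (v : Fin k → Fin n → ℝ) : ℝ :=
  Matrix.det (Matrix.of fun i j => v j ((I.1.orderIsoOfFin I.2 i : Fin n)))

/-- The `k`-form `∑_I f_I dx^I` with coefficient functions `f_I`, evaluated at the point `x`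
on the `k` vectors `v`. -/
def formEval {n k : ℕ} (f : {s : Finset (Fin n) // s.card = k} → (Fin n → ℝ) → ℝ)
    (x : Fin n → ℝ) (v : Fin k → Fin n → ℝ) : ℝ :=
  ∑ I : {s : Finset (Fin n) // s.card = k}, f I x * dxI I v

/-- The vertices of the standard `n`-simplex: `p₀ = 0`, `pᵢ = eᵢ`. -/
def vert (n : ℕ) : Fin (n+1) → Fin n → ℝ :=
  Fin.cases 0 (fun j => Pi.single j 1)

/-- Affine parametrization of the `k`-face of the standard `n`-simplex with vertex set `S`
(vertices taken in increasing order), defined on the standard `k`-simplex. -/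
def facePt {n k : ℕ} (S : {s : Finset (Fin (n+1)) // s.card = k+1}) (y : Fin k → ℝ) :
    Fin n → ℝ :=
  vert n ((S.1.orderIsoOfFin S.2 0 : Fin (n+1))) +
    ∑ s : Fin k, y s • (vert n ((S.1.orderIsoOfFin S.2 s.succ : Fin (n+1))) -
      vert n ((S.1.orderIsoOfFin S.2 0 : Fin (n+1))))

/-- The differential of the face parametrization `facePt S`. -/
def faceDir {n k : ℕ} (S : {s : Finset (Fin (n+1)) // s.card = k+1}) (w : Fin k → ℝ) :
    Fin n → ℝ :=
  ∑ s : Fin k, w s • (vert n ((S.1.orderIsoOfFin S.2 s.succ : Fin (n+1))) -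
    vert n ((S.1.orderIsoOfFin S.2 0 : Fin (n+1))))

/-- Barycentric coordinates of the standard `n`-simplex: `ν₀ = 1 - ∑ xⁱ`, `νᵢ = xⁱ`. -/
def nu (n : ℕ) (j : Fin (n+1)) (x : Fin n → ℝ) : ℝ :=
  Fin.cases (1 - ∑ i, x i) (fun i => x i) j

/-- The differentials `dνⱼ` of the barycentric coordinates, as linear functionals. -/
def dnu (n : ℕ) (j : Fin (n+1)) (v : Fin n → ℝ) : ℝ :=
  Fin.cases (-(∑ i, v i)) (fun i => v i) j

/-- The Whitney form `W τ* = k! ∑ⱼ (-1)ʲ ν_{iⱼ} dν_{i₀} ∧ ⋯ ∧ (omit dν_{iⱼ}) ∧ ⋯ ∧ dν_{i_k}`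
of the dual cochain of the face with vertex set `S`, evaluated at `x` on the vectors `v`. -/
def whitneyFace {n k : ℕ} (S : {s : Finset (Fin (n+1)) // s.card = k+1})
    (x : Fin n → ℝ) (v : Fin k → Fin n → ℝ) : ℝ :=
  (Nat.factorial k : ℝ) * ∑ j : Fin (k+1), (-1 : ℝ) ^ (j : ℕ) *
    nu n ((S.1.orderIsoOfFin S.2 j : Fin (n+1))) x *
    Matrix.det (Matrix.of fun (t : Fin k) (m2 : Fin k) =>
      dnu n ((S.1.orderIsoOfFin S.2 (j.succAbove t) : Fin (n+1))) (v m2))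

/-- The Whitney map `W`, extended linearly to all real `k`-cochains. -/
def whitney {n k : ℕ} (c : {s : Finset (Fin (n+1)) // s.card = k+1} → ℝ)
    (x : Fin n → ℝ) (v : Fin k → Fin n → ℝ) : ℝ :=
  ∑ S, c S * whitneyFace S x v

/-- The integral of a `k`-form (given by its evaluation function `F`) over the `k`-face with
vertex set `S`, computed via the parametrization `facePt S`. -/
noncomputable def faceIntegral {n k : ℕ} (S : {s : Finset (Fin (n+1)) // s.card = k+1})
    (F : (Fin n → ℝ) → (Fin k → Fin n → ℝ) → ℝ) : ℝ :=
  ∫ y in stdSimp k, F (facePt S y) (fun s => faceDir S (Pi.single s 1))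

/-- A `k`-form (given by its evaluation function) pulls back to a constant form on every
`k`-face of the standard `n`-simplex. -/
def ConstOnFaces {n k : ℕ} (F : (Fin n → ℝ) → (Fin k → Fin n → ℝ) → ℝ) : Prop :=
  ∀ S : {s : Finset (Fin (n+1)) // s.card = k+1}, ∃ cst : ℝ,
    ∀ y ∈ stdSimp k, ∀ w : Fin k → Fin k → ℝ,
      F (facePt S y) (fun i => faceDir S (w i)) = cst * Matrix.det (Matrix.of fun i j => w j i)
section WhitneyAux

variable {n k : ℕ}

/-- The `u`-th vertex (in increasing order) of the face `S`. -/
def fv (S : {s : Finset (Fin (n+1)) // s.card = k+1}) (u : Fin (k+1)) : Fin (n+1) :=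
  S.1.orderIsoOfFin S.2 u

lemma fv_mem (S : {s : Finset (Fin (n+1)) // s.card = k+1}) (u : Fin (k+1)) :
    fv S u ∈ S.1 := (S.1.orderIsoOfFin S.2 u).2

lemma fv_inj {S : {s : Finset (Fin (n+1)) // s.card = k+1}} {u u' : Fin (k+1)} :
    fv S u = fv S u' ↔ u = u' := by
  constructor
  · intro h
    exact (S.1.orderIsoOfFin S.2).injective (Subtype.coe_injective h)
  · rintro rfl; rfl

@[simp] lemma dnu_zero_vec (j : Fin (n+1)) : dnu n j 0 = 0 := by
  induction j using Fin.cases <;> simp [dnu]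

lemma dnu_add (j : Fin (n+1)) (x y : Fin n → ℝ) :
    dnu n j (x + y) = dnu n j x + dnu n j y := by
  induction j using Fin.cases <;> simp [dnu, Finset.sum_add_distrib] <;> ring

lemma dnu_smul (j : Fin (n+1)) (c : ℝ) (x : Fin n → ℝ) :
    dnu n j (c • x) = c * dnu n j x := by
  induction j using Fin.cases <;> simp [dnu, Finset.mul_sum]

lemma dnu_sub (j : Fin (n+1)) (x y : Fin n → ℝ) :
    dnu n j (x - y) = dnu n j x - dnu n j y := by
  have h := dnu_add j (x - y) y
  simp at h
  linarith

lemma dnu_sum {ι : Type*} (j : Fin (n+1)) (s : Finset ι) (f : ι → Fin n → ℝ) :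
    dnu n j (∑ i ∈ s, f i) = ∑ i ∈ s, dnu n j (f i) := by
  induction s using Finset.cons_induction with
  | empty => simp
  | cons a s ha ih => rw [Finset.sum_cons, Finset.sum_cons, dnu_add, ih]

lemma nu_eq (j : Fin (n+1)) (x : Fin n → ℝ) :
    nu n j x = dnu n j x + (if j = 0 then 1 else 0) := by
  induction j using Fin.cases <;>
    simp [nu, dnu, Fin.succ_ne_zero] <;> ring

lemma dnu_vert (a b : Fin (n+1)) :
    dnu n a (vert n b) = (if a = b then (1:ℝ) else 0) - (if a = 0 then 1 else 0) := by
  induction a using Fin.cases with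
  | zero =>
    induction b using Fin.cases with
    | zero => simp [dnu, vert]
    | succ j => simp [dnu, vert, Pi.single_apply, (Fin.succ_ne_zero j).symm]
  | succ i =>
    induction b using Fin.cases with
    | zero => simp [dnu, vert, Fin.succ_ne_zero i]
    | succ j =>
      simp [dnu, vert, Pi.single_apply, Fin.succ_ne_zero i, Fin.succ_inj, eq_comm]

lemma nu_vert (a b : Fin (n+1)) :
    nu n a (vert n b) = (if a = b then (1:ℝ) else 0) := by
  rw [nu_eq, dnu_vert]; ring

lemma dnu_vert_sub (a b b' : Fin (n+1)) :
    dnu n a (vert n b - vert n b')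
      = (if a = b then (1:ℝ) else 0) - (if a = b' then 1 else 0) := by
  rw [dnu_sub, dnu_vert, dnu_vert]; ring

lemma facePt_def (S : {s : Finset (Fin (n+1)) // s.card = k+1}) (y : Fin k → ℝ) :
    facePt S y = vert n (fv S 0) + faceDir S y := rfl

lemma dnu_faceDir (S : {s : Finset (Fin (n+1)) // s.card = k+1}) (a : Fin (n+1))
    (w : Fin k → ℝ) :
    dnu n a (faceDir S w)
      = ∑ s : Fin k, w s * ((if a = fv S s.succ then (1:ℝ) else 0)
          - (if a = fv S 0 then 1 else 0)) := by
  unfold faceDir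
  rw [dnu_sum]
  refine Finset.sum_congr rfl fun s _ => ?_
  rw [dnu_smul, dnu_vert_sub]
  rfl

lemma ne_fv_of_notMem {S : {s : Finset (Fin (n+1)) // s.card = k+1}} {a : Fin (n+1)}
    (ha : a ∉ S.1) (u : Fin (k+1)) : a ≠ fv S u := by
  intro h; exact ha (h ▸ fv_mem S u)

lemma dnu_faceDir_notMem {S : {s : Finset (Fin (n+1)) // s.card = k+1}} {a : Fin (n+1)}
    (ha : a ∉ S.1) (w : Fin k → ℝ) : dnu n a (faceDir S w) = 0 := by
  rw [dnu_faceDir]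
  refine Finset.sum_eq_zero fun s _ => ?_
  rw [if_neg (ne_fv_of_notMem ha s.succ), if_neg (ne_fv_of_notMem ha 0)]
  ring

lemma dnu_faceDir_zero (S : {s : Finset (Fin (n+1)) // s.card = k+1}) (w : Fin k → ℝ) :
    dnu n (fv S 0) (faceDir S w) = -∑ s, w s := by
  rw [dnu_faceDir, ← Finset.sum_neg_distrib]
  refine Finset.sum_congr rfl fun s _ => ?_
  rw [if_neg (fun h => (Fin.succ_ne_zero s) (fv_inj.1 h).symm), if_pos rfl]
  ring

lemma dnu_faceDir_succ (S : {s : Finset (Fin (n+1)) // s.card = k+1}) (t : Fin k)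
    (w : Fin k → ℝ) : dnu n (fv S t.succ) (faceDir S w) = w t := by
  rw [dnu_faceDir]
  have : ∀ s : Fin k, w s * ((if fv S t.succ = fv S s.succ then (1:ℝ) else 0)
      - (if fv S t.succ = fv S 0 then 1 else 0))
      = if s = t then w s else 0 := by
    intro s
    rw [if_neg (fun h => (Fin.succ_ne_zero t) (fv_inj.1 h))]
    simp only [fv_inj, Fin.succ_inj]
    by_cases h : t = s
    · subst h; simp
    · rw [if_neg h, if_neg (Ne.symm h)]; ring
  simp only [this]
  simp

lemma nu_facePt (S : {s : Finset (Fin (n+1)) // s.card = k+1}) (a : Fin (n+1))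
    (y : Fin k → ℝ) :
    nu n a (facePt S y) = (if a = fv S 0 then 1 else 0) + dnu n a (faceDir S y) := by
  rw [facePt_def, nu_eq, dnu_add, dnu_vert]
  ring

lemma nu_facePt_notMem {S : {s : Finset (Fin (n+1)) // s.card = k+1}} {a : Fin (n+1)}
    (ha : a ∉ S.1) (y : Fin k → ℝ) : nu n a (facePt S y) = 0 := by
  rw [nu_facePt, if_neg (ne_fv_of_notMem ha 0), dnu_faceDir_notMem ha]
  ring

lemma nu_facePt_zero (S : {s : Finset (Fin (n+1)) // s.card = k+1}) (y : Fin k → ℝ) :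
    nu n (fv S 0) (facePt S y) = 1 - ∑ s, y s := by
  rw [nu_facePt, if_pos rfl, dnu_faceDir_zero]; ring

lemma nu_facePt_succ (S : {s : Finset (Fin (n+1)) // s.card = k+1}) (t : Fin k)
    (y : Fin k → ℝ) : nu n (fv S t.succ) (facePt S y) = y t := by
  rw [nu_facePt, if_neg (fun h => (Fin.succ_ne_zero t) (fv_inj.1 h)), dnu_faceDir_succ]
  ring

/-- The Whitney form of a face as a determinant of a `(k+1) × (k+1)` matrix. -/
def Bmat (S : {s : Finset (Fin (n+1)) // s.card = k+1}) (x : Fin n → ℝ)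
    (v : Fin k → Fin n → ℝ) : Matrix (Fin (k+1)) (Fin (k+1)) ℝ :=
  Matrix.of fun u m => Fin.cases (nu n (fv S u) x) (fun m' => dnu n (fv S u) (v m')) m

@[simp] lemma Bmat_zero (S : {s : Finset (Fin (n+1)) // s.card = k+1}) (x : Fin n → ℝ)
    (v : Fin k → Fin n → ℝ) (u : Fin (k+1)) : Bmat S x v u 0 = nu n (fv S u) x := rfl

@[simp] lemma Bmat_succ (S : {s : Finset (Fin (n+1)) // s.card = k+1}) (x : Fin n → ℝ)
    (v : Fin k → Fin n → ℝ) (u : Fin (k+1)) (m : Fin k) :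
    Bmat S x v u m.succ = dnu n (fv S u) (v m) := by
  simp [Bmat]

lemma whitneyFace_eq_det (S : {s : Finset (Fin (n+1)) // s.card = k+1}) (x : Fin n → ℝ)
    (v : Fin k → Fin n → ℝ) :
    whitneyFace S x v = (Nat.factorial k : ℝ) * (Bmat S x v).det := by
  rw [Matrix.det_succ_column_zero]
  unfold whitneyFace
  rw [Finset.mul_sum, Finset.mul_sum]
  refine Finset.sum_congr rfl fun j _ => ?_
  have : (Bmat S x v).submatrix j.succAbove Fin.succ
      = Matrix.of fun (t : Fin k) (m2 : Fin k) =>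
          dnu n ((S.1.orderIsoOfFin S.2 (j.succAbove t) : Fin (n+1))) (v m2) := by
    ext t m
    simp [Bmat, Matrix.submatrix_apply, fv]
  rw [this, Bmat_zero]
  show (Nat.factorial k : ℝ) * ((-1) ^ (j:ℕ) * nu n (fv S j) x * _) = _
  unfold fv
  ring

lemma det_key (B : Matrix (Fin (k+1)) (Fin (k+1)) ℝ)
    (h : ∀ m : Fin k, ∑ u, B u m.succ = 0) :
    B.det = (∑ u, B u 0) * (B.submatrix Fin.succ Fin.succ).det := by
  have h1 : (B.updateRow 0 (∑ i, (1:ℝ) • B i)).det = B.det := by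
    rw [Matrix.det_updateRow_sum]; simp
  rw [← h1, Matrix.det_succ_row_zero, Fin.sum_univ_succ]
  have row0 : ∀ j, (B.updateRow 0 (∑ i, (1:ℝ) • B i)) 0 j = ∑ u, B u j := by
    intro j
    simp [Matrix.updateRow_self, Finset.sum_apply]
    exact Finset.sum_apply j Finset.univ (fun x => B x)
  have hsub : (B.updateRow 0 (∑ i, (1:ℝ) • B i)).submatrix Fin.succ (Fin.succAbove 0)
      = B.submatrix Fin.succ Fin.succ := by
    ext t m
    simp [Matrix.submatrix_apply, Matrix.updateRow_ne (Fin.succ_ne_zero t), Fin.succAbove_zero]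
  rw [hsub, row0]
  have tail : ∀ j : Fin k,
      (-1:ℝ) ^ ((j.succ : Fin (k+1)) : ℕ) * (B.updateRow 0 (∑ i, (1:ℝ) • B i)) 0 j.succ *
        ((B.updateRow 0 (∑ i, (1:ℝ) • B i)).submatrix Fin.succ (j.succ).succAbove).det = 0 := by
    intro j
    rw [row0, h j]
    ring
  rw [Finset.sum_congr rfl fun j _ => tail j]
  simp

end WhitneyAux
section WhitneyAux2

variable {n k : ℕ}

lemma Bmat_det_pullback (S' S : {s : Finset (Fin (n+1)) // s.card = k+1})
    (y : Fin k → ℝ) (w : Fin k → Fin k → ℝ) :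
    (Bmat S' (facePt S y) (fun i => faceDir S (w i))).det =
      (if S' = S then (1:ℝ) else 0) * Matrix.det (Matrix.of fun i j => w j i) := by
  by_cases hSS : S' = S
  · subst hSS
    rw [if_pos rfl, one_mul]
    have hcol : ∀ m : Fin k, ∑ u, (Bmat S' (facePt S' y) (fun i => faceDir S' (w i))) u m.succ = 0 := by
      intro m
      simp only [Bmat_succ]
      rw [Fin.sum_univ_succ, dnu_faceDir_zero]
      simp only [dnu_faceDir_succ]
      ring
    rw [det_key _ hcol]
    have hsum : ∑ u, (Bmat S' (facePt S' y) (fun i => faceDir S' (w i))) u 0 = 1 := by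
      simp only [Bmat_zero]
      rw [Fin.sum_univ_succ, nu_facePt_zero]
      simp only [nu_facePt_succ]
      ring
    rw [hsum, one_mul]
    congr 1
    ext t m
    simp only [Matrix.submatrix_apply, Bmat_succ, dnu_faceDir_succ, Matrix.of_apply]
  · rw [if_neg hSS, zero_mul]
    have hns : ¬ S'.1 ⊆ S.1 := by
      intro hsub
      exact hSS (Subtype.ext (Finset.eq_of_subset_of_card_le hsub
        (le_of_eq (S.2.trans S'.2.symm))))
    obtain ⟨a, haS', haS⟩ := Finset.not_subset.1 hns
    set u0 := (S'.1.orderIsoOfFin S'.2).symm ⟨a, haS'⟩ with hu0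
    have hfv : fv S' u0 = a := by
      have := (S'.1.orderIsoOfFin S'.2).apply_symm_apply ⟨a, haS'⟩
      exact congrArg Subtype.val this
    apply Matrix.det_eq_zero_of_row_eq_zero u0
    intro m
    induction m using Fin.cases with
    | zero => rw [Bmat_zero, hfv]; exact nu_facePt_notMem haS y
    | succ m' => rw [Bmat_succ, hfv]; exact dnu_faceDir_notMem haS _

lemma whitneyFace_pullback (S' S : {s : Finset (Fin (n+1)) // s.card = k+1})
    (y : Fin k → ℝ) (w : Fin k → Fin k → ℝ) :
    whitneyFace S' (facePt S y) (fun i => faceDir S (w i)) =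
      (if S' = S then (Nat.factorial k : ℝ) else 0) *
        Matrix.det (Matrix.of fun i j => w j i) := by
  rw [whitneyFace_eq_det, Bmat_det_pullback]
  split_ifs <;> ring

lemma whitney_pullback (c : {s : Finset (Fin (n+1)) // s.card = k+1} → ℝ)
    (S : {s : Finset (Fin (n+1)) // s.card = k+1}) (y : Fin k → ℝ)
    (w : Fin k → Fin k → ℝ) :
    whitney c (facePt S y) (fun i => faceDir S (w i)) =
      (Nat.factorial k : ℝ) * c S * Matrix.det (Matrix.of fun i j => w j i) := by
  unfold whitney
  simp only [whitneyFace_pullback]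
  rw [Fintype.sum_eq_single S]
  · rw [if_pos rfl]; ring
  · intro b hb
    rw [if_neg hb]; ring

/-- closure properties of affine functions -/
lemma isAffineFn_const (r : ℝ) : IsAffineFn (fun _ : Fin n → ℝ => r) :=
  ⟨0, r, fun x => by simp⟩

lemma IsAffineFn.add {f g : (Fin n → ℝ) → ℝ} (hf : IsAffineFn f) (hg : IsAffineFn g) :
    IsAffineFn (fun x => f x + g x) := by
  obtain ⟨a, b, ha⟩ := hf
  obtain ⟨a', b', ha'⟩ := hg
  exact ⟨a + a', b + b', fun x => by
    simp [ha, ha', Finset.sum_add_distrib, add_mul]; ring⟩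

lemma IsAffineFn.const_mul {f : (Fin n → ℝ) → ℝ} (hf : IsAffineFn f) (r : ℝ) :
    IsAffineFn (fun x => r * f x) := by
  obtain ⟨a, b, ha⟩ := hf
  refine ⟨r • a, r * b, fun x => ?_⟩
  show r * f x = _
  rw [ha, mul_add, Finset.mul_sum]
  congr 1
  exact Finset.sum_congr rfl fun i _ => by simp; ring

lemma IsAffineFn.mul_const {f : (Fin n → ℝ) → ℝ} (hf : IsAffineFn f) (r : ℝ) :
    IsAffineFn (fun x => f x * r) := by
  have := hf.const_mul r
  simpa [mul_comm] using this

lemma IsAffineFn.sub {f g : (Fin n → ℝ) → ℝ} (hf : IsAffineFn f) (hg : IsAffineFn g) :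
    IsAffineFn (fun x => f x - g x) := by
  have := hf.add (hg.const_mul (-1))
  simpa [sub_eq_add_neg] using this

lemma isAffineFn_sum {ι : Type*} (s : Finset ι) (f : ι → (Fin n → ℝ) → ℝ)
    (h : ∀ i ∈ s, IsAffineFn (f i)) :
    IsAffineFn (fun x => ∑ i ∈ s, f i x) := by
  induction s using Finset.cons_induction with
  | empty => simpa using isAffineFn_const (n := n) 0
  | cons a s ha ih =>
    simp only [Finset.sum_cons]
    exact (h a (Finset.mem_cons_self a s)).add
      (ih fun i hi => h i (Finset.mem_cons_of_mem hi))

lemma isAffineFn_nu (a : Fin (n+1)) : IsAffineFn (nu n a) := by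
  induction a using Fin.cases with
  | zero =>
    refine ⟨fun _ => -1, 1, fun x => ?_⟩
    simp [nu, Finset.sum_neg_distrib]
    ring
  | succ i =>
    refine ⟨Pi.single i 1, 0, fun x => ?_⟩
    simp [nu, Pi.single_apply, ite_mul]

lemma whitney_isAffine (c : {s : Finset (Fin (n+1)) // s.card = k+1} → ℝ)
    (v : Fin k → Fin n → ℝ) : IsAffineFn (fun x => whitney c x v) := by
  unfold whitney whitneyFace
  refine isAffineFn_sum _ _ fun S _ => ?_
  refine IsAffineFn.const_mul ?_ (c S)
  refine IsAffineFn.const_mul ?_ _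
  refine isAffineFn_sum _ _ fun j _ => ?_
  have h1 : IsAffineFn (fun x => (-1:ℝ) ^ (j:ℕ) *
      nu n ((S.1.orderIsoOfFin S.2 j : Fin (n+1))) x) :=
    (isAffineFn_nu _).const_mul _
  exact h1.mul_const _

end WhitneyAux2
section WhitneyVol

open scoped ENNReal Pointwise

lemma isClosed_stdSimp (k : ℕ) : IsClosed (stdSimp k) := by
  have h1 : IsClosed {x : Fin k → ℝ | ∀ i, 0 ≤ x i} := by
    have : {x : Fin k → ℝ | ∀ i, 0 ≤ x i} = ⋂ i, {x | 0 ≤ x i} := by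
      ext x; simp
    rw [this]
    exact isClosed_iInter fun i => isClosed_le continuous_const (continuous_apply i)
  have h2 : IsClosed {x : Fin k → ℝ | ∑ i, x i ≤ 1} :=
    isClosed_le (by continuity) continuous_const
  exact h1.inter h2

lemma measurableSet_stdSimp (k : ℕ) : MeasurableSet (stdSimp k) :=
  (isClosed_stdSimp k).measurableSet

/-- The dilated simplex. -/
def sSimp (k : ℕ) (r : ℝ) : Set (Fin k → ℝ) :=
  {x | (∀ i, 0 ≤ x i) ∧ (∑ i, x i) ≤ r}

lemma sSimp_eq_smul (k : ℕ) {r : ℝ} (hr : 0 < r) : sSimp k r = r • stdSimp k := by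
  ext x
  rw [Set.mem_smul_set_iff_inv_smul_mem₀ (ne_of_gt hr)]
  constructor
  · rintro ⟨h1, h2⟩
    refine ⟨fun i => ?_, ?_⟩
    · simp only [Pi.smul_apply, smul_eq_mul]
      exact mul_nonneg (by positivity) (h1 i)
    · simp only [Pi.smul_apply, smul_eq_mul, ← Finset.mul_sum]
      rw [inv_mul_le_iff₀ hr, mul_one]
      exact h2
  · rintro ⟨h1, h2⟩
    simp only [Pi.smul_apply, smul_eq_mul, ← Finset.mul_sum] at h1 h2
    constructor
    · intro i
      have := h1 i
      nlinarith [h1 i, inv_pos.2 hr]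
    · rw [inv_mul_le_iff₀ hr, mul_one] at h2
      exact h2

lemma volume_sSimp (k : ℕ) {r : ℝ} (hr : 0 < r) :
    volume (sSimp k r) = ENNReal.ofReal (r ^ k) * volume (stdSimp k) := by
  rw [sSimp_eq_smul k hr, MeasureTheory.Measure.addHaar_smul]
  congr 2
  rw [abs_of_nonneg (by positivity)]
  congr 1
  simp [Module.finrank_fin_fun]

lemma volume_stdSimp_zero : volume (stdSimp 0) = 1 := by
  have : stdSimp 0 = Set.univ := by
    ext x
    simp [stdSimp]
  rw [this]
  simp only [MeasureTheory.volume_pi, MeasureTheory.Measure.pi_univ]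
  simp

lemma volume_stdSimp_succ (k : ℕ) :
    volume (stdSimp (k+1)) = ENNReal.ofReal (1 / (k+1)) * volume (stdSimp k) := by
  classical
  set e := MeasurableEquiv.piFinSuccAbove (fun _ : Fin (k+1) => ℝ) 0
  set A : Set (ℝ × (Fin k → ℝ)) :=
    {p | 0 ≤ p.1 ∧ (∀ i, 0 ≤ p.2 i) ∧ p.1 + ∑ i, p.2 i ≤ 1} with hA
  have hAm : MeasurableSet A := by
    have hc : IsClosed A := by
      have h1 : IsClosed {p : ℝ × (Fin k → ℝ) | 0 ≤ p.1} :=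
        isClosed_le continuous_const continuous_fst
      have h2 : IsClosed {p : ℝ × (Fin k → ℝ) | ∀ i, 0 ≤ p.2 i} := by
        have : {p : ℝ × (Fin k → ℝ) | ∀ i, 0 ≤ p.2 i} = ⋂ i, {p | 0 ≤ p.2 i} := by
          ext p; simp
        rw [this]
        exact isClosed_iInter fun i =>
          isClosed_le continuous_const ((continuous_apply i).comp continuous_snd)
      have h3 : IsClosed {p : ℝ × (Fin k → ℝ) | p.1 + ∑ i, p.2 i ≤ 1} := by
        refine isClosed_le ?_ continuous_const
        exact continuous_fst.add (by
          refine continuous_finset_sum _ fun i _ => (continuous_apply i).comp continuous_snd)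
      have : A = {p : ℝ × (Fin k → ℝ) | 0 ≤ p.1} ∩
          ({p | ∀ i, 0 ≤ p.2 i} ∩ {p | p.1 + ∑ i, p.2 i ≤ 1}) := by
        ext p; simp [hA, and_assoc]
      rw [this]
      exact h1.inter (h2.inter h3)
    exact hc.measurableSet
  have hpre : stdSimp (k+1) = e ⁻¹' A := by
    ext x
    simp only [Set.mem_preimage, hA, Set.mem_setOf_eq, stdSimp,
      MeasurableEquiv.piFinSuccAbove_apply, Fin.insertNthEquiv]
    constructor
    · rintro ⟨h1, h2⟩
      refine ⟨h1 0, fun i => h1 _, ?_⟩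
      rw [Fin.sum_univ_succ] at h2
      convert h2 using 2 <;> simp [e, Fin.succAbove_zero, Fin.insertNthEquiv, Fin.tail]
    · rintro ⟨h1, h2, h3⟩
      constructor
      · intro i
        induction i using Fin.cases with
        | zero => exact h1
        | succ i' => simpa [e, Fin.succAbove_zero, Fin.insertNthEquiv, Fin.tail] using h2 i'
      · rw [Fin.sum_univ_succ]
        convert h3 using 2 <;> simp [e, Fin.succAbove_zero, Fin.insertNthEquiv, Fin.tail]
  have hmp := MeasureTheory.volume_preserving_piFinSuccAbove (fun _ : Fin (k+1) => ℝ) 0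
  rw [hpre, hmp.measure_preimage hAm.nullMeasurableSet]
  rw [MeasureTheory.Measure.volume_eq_prod ℝ (Fin k → ℝ), MeasureTheory.Measure.prod_apply hAm]
  have hslice : ∀ t : ℝ, Prod.mk t ⁻¹' A =
      (if 0 ≤ t then sSimp k (1 - t) else (∅ : Set (Fin k → ℝ))) := by
    intro t
    split_ifs with ht
    · ext x
      simp only [Set.mem_preimage, hA, Set.mem_setOf_eq, sSimp]
      constructor
      · rintro ⟨_, h2, h3⟩; exact ⟨h2, by linarith⟩
      · rintro ⟨h2, h3⟩; exact ⟨ht, h2, by linarith⟩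
    · ext x
      simp only [Set.mem_preimage, hA, Set.mem_setOf_eq, Set.mem_empty_iff_false, iff_false]
      rintro ⟨h1, _, _⟩; exact ht h1
  have hae : (fun t : ℝ => volume (Prod.mk t ⁻¹' A)) =ᵐ[volume]
      (fun t : ℝ => (Set.Ico (0:ℝ) 1).indicator
        (fun t => ENNReal.ofReal ((1 - t)^k) * volume (stdSimp k)) t) := by
    have hsub : {t : ℝ | volume (Prod.mk t ⁻¹' A) ≠ (Set.Ico (0:ℝ) 1).indicator
        (fun t => ENNReal.ofReal ((1 - t)^k) * volume (stdSimp k)) t} ⊆ {1} := by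
      intro t ht
      simp only [Set.mem_setOf_eq] at ht
      by_contra hne
      apply ht
      rw [hslice t]
      by_cases h0 : 0 ≤ t
      · by_cases h1 : t < 1
        · rw [if_pos h0, Set.indicator_of_mem (Set.mem_Ico.2 ⟨h0, h1⟩),
            volume_sSimp k (by linarith)]
        · have ht1 : 1 < t := lt_of_le_of_ne (not_lt.1 h1)
            (fun h => hne (Set.mem_singleton_iff.2 h.symm))
          rw [if_pos h0, Set.indicator_of_notMem (by simp [Set.mem_Ico]; intro; linarith)]
          have : sSimp k (1 - t) = ∅ := by
            ext x
            simp only [sSimp, Set.mem_setOf_eq, Set.mem_empty_iff_false, iff_false]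
            rintro ⟨hx1, hx2⟩
            have : (0:ℝ) ≤ ∑ i, x i := Finset.sum_nonneg fun i _ => hx1 i
            linarith
          rw [this]
          simp
      · rw [if_neg h0, Set.indicator_of_notMem (by simp [Set.mem_Ico]; intro h; exact absurd h h0)]
        simp
    exact MeasureTheory.ae_iff.2 (MeasureTheory.measure_mono_null hsub (Real.volume_singleton))
  rw [MeasureTheory.lintegral_congr_ae hae]
  rw [MeasureTheory.lintegral_indicator measurableSet_Ico]
  rw [MeasureTheory.lintegral_mul_const _ (by
    exact ENNReal.measurable_ofReal.comp (by fun_prop))]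
  congr 1
  -- ∫⁻ t in Ico 0 1, ofReal ((1-t)^k) = ofReal (1/(k+1))
  rw [MeasureTheory.Measure.restrict_congr_set MeasureTheory.Ico_ae_eq_Ioc]
  have hint : MeasureTheory.IntegrableOn (fun t : ℝ => (1 - t)^k) (Set.Ioc 0 1) := by
    apply Continuous.integrableOn_Ioc
    continuity
  rw [← MeasureTheory.ofReal_integral_eq_lintegral_ofReal hint]
  · rw [← intervalIntegral.integral_of_le (zero_le_one)]
    have : (∫ t in (0:ℝ)..1, (1 - t)^k) = ∫ t in (0:ℝ)..1, t^k := by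
      have := intervalIntegral.integral_comp_sub_left (a := (0:ℝ)) (b := 1)
        (fun t => t^k) 1
      simpa using this
    rw [this, integral_pow]
    norm_num
  · refine (MeasureTheory.ae_restrict_iff' measurableSet_Ioc).2 ?_
    filter_upwards with t ht
    have : t ≤ 1 := ht.2
    exact pow_nonneg (by linarith) k

lemma volume_stdSimp (k : ℕ) :
    volume (stdSimp k) = ENNReal.ofReal (1 / (Nat.factorial k : ℝ)) := by
  induction k with
  | zero => simp [volume_stdSimp_zero]
  | succ k ih =>
    rw [volume_stdSimp_succ, ih, ← ENNReal.ofReal_mul (by positivity)]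
    congr 1
    rw [Nat.factorial_succ]
    push_cast
    field_simp

lemma volume_stdSimp_toReal (k : ℕ) :
    (volume (stdSimp k)).toReal = 1 / (Nat.factorial k : ℝ) := by
  rw [volume_stdSimp, ENNReal.toReal_ofReal (by positivity)]

end WhitneyVol
section WhitneyInt

variable {n k : ℕ}

lemma det_single_one :
    Matrix.det (Matrix.of fun i j => (Pi.single j 1 : Fin k → ℝ) i) = 1 := by
  have : (Matrix.of fun i j => (Pi.single j 1 : Fin k → ℝ) i) = (1 : Matrix (Fin k) (Fin k) ℝ) := by
    ext i j
    simp [Pi.single_apply, Matrix.one_apply]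
  rw [this, Matrix.det_one]

lemma factorial_ne_zero' : (Nat.factorial k : ℝ) ≠ 0 :=
  Nat.cast_ne_zero.2 (Nat.factorial_ne_zero k)

lemma faceIntegral_of_const (S : {s : Finset (Fin (n+1)) // s.card = k+1})
    (F : (Fin n → ℝ) → (Fin k → Fin n → ℝ) → ℝ) (cst : ℝ)
    (h : ∀ y ∈ stdSimp k, F (facePt S y) (fun s => faceDir S (Pi.single s 1)) = cst) :
    faceIntegral S F = cst / (Nat.factorial k : ℝ) := by
  unfold faceIntegral
  rw [MeasureTheory.setIntegral_congr_fun (measurableSet_stdSimp k) h]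
  rw [MeasureTheory.setIntegral_const, MeasureTheory.measureReal_def, volume_stdSimp_toReal]
  rw [smul_eq_mul]
  ring

lemma whitney_constOnFaces (c : {s : Finset (Fin (n+1)) // s.card = k+1} → ℝ) :
    ConstOnFaces (whitney c) := by
  intro S
  refine ⟨(Nat.factorial k : ℝ) * c S, fun y _ w => ?_⟩
  rw [whitney_pullback]

lemma faceIntegral_whitney (c : {s : Finset (Fin (n+1)) // s.card = k+1} → ℝ)
    (S : {s : Finset (Fin (n+1)) // s.card = k+1}) :
    faceIntegral S (whitney c) = c S := by
  rw [faceIntegral_of_const S _ ((Nat.factorial k : ℝ) * c S)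
    (fun y _ => by rw [whitney_pullback, det_single_one, mul_one])]
  field_simp

lemma constOnFaces_cst_eq {F : (Fin n → ℝ) → (Fin k → Fin n → ℝ) → ℝ}
    {c : {s : Finset (Fin (n+1)) // s.card = k+1} → ℝ}
    (hco : ConstOnFaces F)
    (hint : ∀ S, faceIntegral S F = c S) :
    ∀ S : {s : Finset (Fin (n+1)) // s.card = k+1}, ∀ y ∈ stdSimp k,
      ∀ w : Fin k → Fin k → ℝ,
      F (facePt S y) (fun i => faceDir S (w i)) =
        whitney c (facePt S y) (fun i => faceDir S (w i)) := by
  intro S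
  obtain ⟨cst, hcst⟩ := hco S
  have hfi : faceIntegral S F = cst / (Nat.factorial k : ℝ) :=
    faceIntegral_of_const S F cst (fun y hy => by
      rw [hcst y hy (fun s => Pi.single s 1), det_single_one, mul_one])
  have hc : cst = (Nat.factorial k : ℝ) * c S := by
    have := (hint S).symm.trans hfi
    field_simp at this
    linarith
  intro y hy w
  rw [hcst y hy w, whitney_pullback, hc]

end WhitneyInt
section WhitneyAlt

variable {n k : ℕ}

/-- `dnu` as a linear map. -/
def dnuL (n : ℕ) (j : Fin (n+1)) : (Fin n → ℝ) →ₗ[ℝ] ℝ where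
  toFun := dnu n j
  map_add' := dnu_add j
  map_smul' := fun c x => by simpa using dnu_smul j c x

@[simp] lemma dnuL_apply (j : Fin (n+1)) (x : Fin n → ℝ) : dnuL n j x = dnu n j x := rfl

/-- the `m`-th element of `I` for a `k`-subset of `Fin n`. -/
def fw (I : {s : Finset (Fin n) // s.card = k}) (m : Fin k) : Fin n :=
  I.1.orderIsoOfFin I.2 m

lemma fw_mem (I : {s : Finset (Fin n) // s.card = k}) (m : Fin k) : fw I m ∈ I.1 :=
  (I.1.orderIsoOfFin I.2 m).2

lemma fw_inj {I : {s : Finset (Fin n) // s.card = k}} {m m' : Fin k} :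
    fw I m = fw I m' ↔ m = m' := by
  constructor
  · intro h; exact (I.1.orderIsoOfFin I.2).injective (Subtype.coe_injective h)
  · rintro rfl; rfl

lemma ne_fw_of_notMem {I : {s : Finset (Fin n) // s.card = k}} {a : Fin n}
    (ha : a ∉ I.1) (m : Fin k) : a ≠ fw I m := fun h => ha (h ▸ fw_mem I m)

noncomputable def altOfL (L : (Fin n → ℝ) →ₗ[ℝ] (Fin k → ℝ)) : (Fin n → ℝ) [⋀^Fin k]→ₗ[ℝ] ℝ :=
  (Matrix.detRowAlternating).compLinearMap L

lemma altOfL_apply (L : (Fin n → ℝ) →ₗ[ℝ] (Fin k → ℝ)) (v : Fin k → Fin n → ℝ) :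
    altOfL L v = Matrix.det (Matrix.of fun t m => L (v m) t) := by
  rw [altOfL, AlternatingMap.compLinearMap_apply, ← Matrix.det_transpose]
  rfl

noncomputable def LrowsD (S : {s : Finset (Fin (n+1)) // s.card = k+1}) (j : Fin (k+1)) :
    (Fin n → ℝ) →ₗ[ℝ] (Fin k → ℝ) :=
  LinearMap.pi (fun t => dnuL n (fv S (j.succAbove t)))

noncomputable def LrowsI (I : {s : Finset (Fin n) // s.card = k}) :
    (Fin n → ℝ) →ₗ[ℝ] (Fin k → ℝ) :=
  LinearMap.pi (fun t => LinearMap.proj (fw I t))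

lemma altOfL_rowsD (S : {s : Finset (Fin (n+1)) // s.card = k+1}) (j : Fin (k+1))
    (v : Fin k → Fin n → ℝ) :
    altOfL (LrowsD S j) v = Matrix.det (Matrix.of fun (t : Fin k) (m : Fin k) =>
      dnu n ((S.1.orderIsoOfFin S.2 (j.succAbove t) : Fin (n+1))) (v m)) := by
  rw [altOfL_apply]; rfl

lemma altOfL_rowsI (I : {s : Finset (Fin n) // s.card = k}) (v : Fin k → Fin n → ℝ) :
    altOfL (LrowsI I) v = dxI I v := by
  rw [altOfL_apply]; rfl

lemma altSum_apply {α : Type*} (s : Finset α) (f : α → ((Fin n → ℝ) [⋀^Fin k]→ₗ[ℝ] ℝ))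
    (v : Fin k → Fin n → ℝ) : (∑ a ∈ s, f a) v = ∑ a ∈ s, f a v := by
  induction s using Finset.cons_induction with
  | empty => simp
  | cons a s ha ih => rw [Finset.sum_cons, Finset.sum_cons, AlternatingMap.add_apply, ih]

/-- The Whitney form at `x`, as an alternating map. -/
noncomputable def whitneyAlt (c : {s : Finset (Fin (n+1)) // s.card = k+1} → ℝ) (x : Fin n → ℝ) :
    (Fin n → ℝ) [⋀^Fin k]→ₗ[ℝ] ℝ :=
  ∑ S, ∑ j : Fin (k+1),
    ((c S * (Nat.factorial k : ℝ)) * ((-1)^(j:ℕ) * nu n (fv S j) x)) • altOfL (LrowsD S j)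

lemma whitneyAlt_apply (c : {s : Finset (Fin (n+1)) // s.card = k+1} → ℝ) (x : Fin n → ℝ)
    (v : Fin k → Fin n → ℝ) : whitneyAlt c x v = whitney c x v := by
  rw [whitneyAlt, altSum_apply]
  unfold whitney whitneyFace
  refine Finset.sum_congr rfl fun S _ => ?_
  rw [altSum_apply, Finset.mul_sum, Finset.mul_sum]
  refine Finset.sum_congr rfl fun j _ => ?_
  rw [AlternatingMap.smul_apply, altOfL_rowsD]
  show _ = c S * ((Nat.factorial k : ℝ) * ((-1)^(j:ℕ) * nu n (fv S j) x * _))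
  rw [smul_eq_mul]
  ring

/-- The coefficients of the Whitney form. -/
def wCoeff (c : {s : Finset (Fin (n+1)) // s.card = k+1} → ℝ)
    (I : {s : Finset (Fin n) // s.card = k}) (x : Fin n → ℝ) : ℝ :=
  whitney c x (fun s => Pi.single (fw I s) 1)

noncomputable def formAlt (g : {s : Finset (Fin n) // s.card = k} → (Fin n → ℝ) → ℝ) (x : Fin n → ℝ) :
    (Fin n → ℝ) [⋀^Fin k]→ₗ[ℝ] ℝ :=
  ∑ I, g I x • altOfL (LrowsI I)

lemma formAlt_apply (g : {s : Finset (Fin n) // s.card = k} → (Fin n → ℝ) → ℝ)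
    (x : Fin n → ℝ) (v : Fin k → Fin n → ℝ) : formAlt g x v = formEval g x v := by
  rw [formAlt, altSum_apply]
  refine Finset.sum_congr rfl fun I _ => ?_
  rw [AlternatingMap.smul_apply, altOfL_rowsI, smul_eq_mul]

lemma dxI_eq_zero {J : {s : Finset (Fin n) // s.card = k}} (v : Fin k → Fin n → ℝ)
    {a : Fin n} (ha : a ∈ J.1) (h : ∀ m, v m a = 0) : dxI J v = 0 := by
  set t0 := (J.1.orderIsoOfFin J.2).symm ⟨a, ha⟩
  have hfw : fw J t0 = a := congrArg Subtype.val ((J.1.orderIsoOfFin J.2).apply_symm_apply ⟨a, ha⟩)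
  apply Matrix.det_eq_zero_of_row_eq_zero t0
  intro m
  show v m (fw J t0) = 0
  rw [hfw]; exact h m

lemma dxI_eq_one {I : {s : Finset (Fin n) // s.card = k}} (v : Fin k → Fin n → ℝ)
    (hv : ∀ t m, v m (fw I t) = if t = m then 1 else 0) : dxI I v = 1 := by
  have : (Matrix.of fun i j => v j ((I.1.orderIsoOfFin I.2 i : Fin n)))
      = (1 : Matrix (Fin k) (Fin k) ℝ) := by
    ext t m
    rw [Matrix.of_apply, Matrix.one_apply]
    exact hv t m
  rw [dxI, this, Matrix.det_one]

lemma dxI_basis (J I : {s : Finset (Fin n) // s.card = k}) :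
    dxI J (fun m => Pi.single (fw I m) (1:ℝ)) = if J = I then 1 else 0 := by
  by_cases h : J = I
  · subst h
    rw [if_pos rfl]
    refine dxI_eq_one _ fun t m => ?_
    rw [Pi.single_apply]
    by_cases htm : t = m
    · subst htm; simp
    · rw [if_neg (fun hh => htm (fw_inj.1 hh)), if_neg htm]
  · rw [if_neg h]
    have hns : ¬ J.1 ⊆ I.1 := by
      intro hsub
      exact h (Subtype.ext (Finset.eq_of_subset_of_card_le hsub (le_of_eq (I.2.trans J.2.symm))))
    obtain ⟨a, haJ, haI⟩ := Finset.not_subset.1 hns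
    refine dxI_eq_zero _ haJ fun m => ?_
    exact Pi.single_eq_of_ne (ne_fw_of_notMem haI m) 1

lemma formEval_basis (g : {s : Finset (Fin n) // s.card = k} → (Fin n → ℝ) → ℝ)
    (x : Fin n → ℝ) (I : {s : Finset (Fin n) // s.card = k}) :
    formEval g x (fun m => Pi.single (fw I m) (1:ℝ)) = g I x := by
  unfold formEval
  rw [Fintype.sum_eq_single I]
  · rw [dxI_basis, if_pos rfl, mul_one]
  · intro J hJ
    rw [dxI_basis, if_neg hJ, mul_zero]

/-- Expansion of the Whitney form in the basic forms `dx^I`. -/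
lemma whitney_eq_formEval (c : {s : Finset (Fin (n+1)) // s.card = k+1} → ℝ)
    (x : Fin n → ℝ) (v : Fin k → Fin n → ℝ) :
    whitney c x v = formEval (wCoeff c) x v := by
  have key : whitneyAlt c x = formAlt (wCoeff c) x := by
    refine Module.Basis.ext_alternating (Pi.basisFun ℝ (Fin n)) fun m hm => ?_
    set I : {s : Finset (Fin n) // s.card = k} :=
      ⟨Finset.univ.map ⟨m, hm⟩, by simp⟩ with hI
    have hmem : ∀ t, m t ∈ I.1 := fun t => Finset.mem_map.2 ⟨t, Finset.mem_univ t, rfl⟩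
    set σ : Fin k → Fin k := fun t => (I.1.orderIsoOfFin I.2).symm ⟨m t, hmem t⟩ with hσdef
    have hσ : ∀ t, fw I (σ t) = m t := fun t =>
      congrArg Subtype.val ((I.1.orderIsoOfFin I.2).apply_symm_apply ⟨m t, hmem t⟩)
    have σinj : Function.Injective σ := fun a b h => hm (by rw [← hσ a, ← hσ b, h])
    set perm : Equiv.Perm (Fin k) :=
      Equiv.ofBijective σ ((Finite.injective_iff_bijective).1 σinj) with hperm
    have htuple : (fun i => (Pi.basisFun ℝ (Fin n)) (m i))
        = (fun s => Pi.single (fw I s) (1:ℝ)) ∘ perm := by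
      funext t
      show Pi.basisFun ℝ (Fin n) (m t) = Pi.single (fw I (σ t)) 1
      rw [hσ t, Pi.basisFun_apply]
    rw [htuple, AlternatingMap.map_perm, AlternatingMap.map_perm]
    congr 1
    rw [whitneyAlt_apply, formAlt_apply, formEval_basis]
    rfl
  rw [← whitneyAlt_apply, key, formAlt_apply]

end WhitneyAlt
section WhitneyUniq

variable {n k : ℕ}

@[simp] lemma vert_zero : vert n 0 = 0 := rfl

@[simp] lemma vert_succ (i : Fin n) : vert n i.succ = Pi.single i 1 := by
  simp [vert]

lemma faceDir_ind (S : {s : Finset (Fin (n+1)) // s.card = k+1}) (u : Fin (k+1)) :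
    faceDir S (fun s => if s.succ = u then (1:ℝ) else 0)
      = vert n (fv S u) - vert n (fv S 0) := by
  unfold faceDir
  induction u using Fin.cases with
  | zero =>
    have : ∀ s : Fin k, ((if s.succ = (0 : Fin (k+1)) then (1:ℝ) else 0)
        • (vert n ((S.1.orderIsoOfFin S.2 s.succ : Fin (n+1)))
          - vert n ((S.1.orderIsoOfFin S.2 0 : Fin (n+1))))) = 0 := by
      intro s
      rw [if_neg (Fin.succ_ne_zero s), zero_smul]
    rw [Finset.sum_congr rfl fun s _ => this s]
    simp [fv]
  | succ t =>
    have : ∀ s : Fin k, ((if s.succ = t.succ then (1:ℝ) else 0)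
        • (vert n ((S.1.orderIsoOfFin S.2 s.succ : Fin (n+1)))
          - vert n ((S.1.orderIsoOfFin S.2 0 : Fin (n+1)))))
        = if s = t then (vert n ((S.1.orderIsoOfFin S.2 s.succ : Fin (n+1)))
          - vert n ((S.1.orderIsoOfFin S.2 0 : Fin (n+1)))) else 0 := by
      intro s
      simp only [Fin.succ_inj]
      split_ifs <;> simp
    rw [Finset.sum_congr rfl fun s _ => this s, Finset.sum_ite_eq' Finset.univ t]
    simp [fv]

lemma facePt_ind (S : {s : Finset (Fin (n+1)) // s.card = k+1}) (u : Fin (k+1)) :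
    facePt S (fun s => if s.succ = u then (1:ℝ) else 0) = vert n (fv S u) := by
  rw [facePt_def, faceDir_ind]
  abel

lemma ind_mem_stdSimp (u : Fin (k+1)) :
    (fun s => if s.succ = u then (1:ℝ) else 0) ∈ stdSimp k := by
  constructor
  · intro i
    dsimp only
    split_ifs <;> norm_num
  · induction u using Fin.cases with
    | zero =>
      have : ∀ s : Fin k, (if s.succ = (0:Fin (k+1)) then (1:ℝ) else 0) = 0 := fun s =>
        if_neg (Fin.succ_ne_zero s)
      rw [Finset.sum_congr rfl fun s _ => this s]
      norm_num
    | succ t =>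
      have : ∀ s : Fin k, (if s.succ = t.succ then (1:ℝ) else 0)
          = if s = t then (1:ℝ) else 0 := by
        intro s; simp only [Fin.succ_inj]
      rw [Finset.sum_congr rfl fun s _ => this s, Finset.sum_ite_eq' Finset.univ t]
      simp

lemma faceDir_sub (S : {s : Finset (Fin (n+1)) // s.card = k+1}) (w w' : Fin k → ℝ) :
    faceDir S (fun s => w s - w' s) = faceDir S w - faceDir S w' := by
  unfold faceDir
  rw [← Finset.sum_sub_distrib]
  exact Finset.sum_congr rfl fun s _ => sub_smul _ _ _

lemma faceDir_pair (S : {s : Finset (Fin (n+1)) // s.card = k+1}) (u r : Fin (k+1)) :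
    faceDir S (fun s => (if s.succ = u then (1:ℝ) else 0) - (if s.succ = r then 1 else 0))
      = vert n (fv S u) - vert n (fv S r) := by
  rw [faceDir_sub, faceDir_ind, faceDir_ind]
  abel

/-- Central evaluation: a form whose pullbacks to faces vanish, vanishes on the
vertex/edge-direction configurations of each face. -/
lemma eval_zero_of_pullback_zero {g : {s : Finset (Fin n) // s.card = k} → (Fin n → ℝ) → ℝ}
    (hg : ∀ S : {s : Finset (Fin (n+1)) // s.card = k+1}, ∀ y ∈ stdSimp k,
      ∀ w : Fin k → Fin k → ℝ,
      formEval g (facePt S y) (fun i => faceDir S (w i)) = 0)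
    (S : {s : Finset (Fin (n+1)) // s.card = k+1}) (u r : Fin (k+1))
    (p : Fin k → Fin (k+1)) :
    formEval g (vert n (fv S u)) (fun m => vert n (fv S (p m)) - vert n (fv S r)) = 0 := by
  have h := hg S _ (ind_mem_stdSimp u)
    (fun m => fun s => (if s.succ = p m then (1:ℝ) else 0) - (if s.succ = r then 1 else 0))
  rw [facePt_ind] at h
  have h2 : (fun m => faceDir S (fun s =>
      (if s.succ = p m then (1:ℝ) else 0) - (if s.succ = r then 1 else 0)))
      = fun m => vert n (fv S (p m)) - vert n (fv S r) :=
    funext fun m => faceDir_pair S (p m) r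
  rw [h2] at h
  exact h

lemma coeff_zero_of_pullback_zero (g : {s : Finset (Fin n) // s.card = k} → (Fin n → ℝ) → ℝ)
    (haff : ∀ I, IsAffineFn (g I))
    (hg : ∀ S : {s : Finset (Fin (n+1)) // s.card = k+1}, ∀ y ∈ stdSimp k,
      ∀ w : Fin k → Fin k → ℝ,
      formEval g (facePt S y) (fun i => faceDir S (w i)) = 0) :
    ∀ I x, g I x = 0 := by
  -- Step 1 : values at 0 and at the vertices of I
  have hvert : ∀ I : {s : Finset (Fin n) // s.card = k},
      g I 0 = 0 ∧ ∀ s : Fin k, g I (Pi.single (fw I s) 1) = 0 := by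
    intro I
    have hnotmem : (0 : Fin (n+1)) ∉ I.1.map ⟨Fin.succ, Fin.succ_injective n⟩ := by
      simp only [Finset.mem_map, Function.Embedding.coeFn_mk]
      rintro ⟨a, -, ha⟩
      exact Fin.succ_ne_zero a ha
    set S : {s : Finset (Fin (n+1)) // s.card = k+1} :=
      ⟨insert 0 (I.1.map ⟨Fin.succ, Fin.succ_injective n⟩), by
        rw [Finset.card_insert_of_notMem hnotmem, Finset.card_map, I.2]⟩ with hS
    have hmem0 : (0 : Fin (n+1)) ∈ S.1 := Finset.mem_insert_self _ _
    have hmemm : ∀ m : Fin k, (fw I m).succ ∈ S.1 := fun m =>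
      Finset.mem_insert_of_mem (Finset.mem_map.2 ⟨fw I m, fw_mem I m, rfl⟩)
    set u0 : Fin (k+1) := (S.1.orderIsoOfFin S.2).symm ⟨0, hmem0⟩ with hu0
    set um : Fin k → Fin (k+1) := fun m => (S.1.orderIsoOfFin S.2).symm ⟨(fw I m).succ, hmemm m⟩
      with hum
    have hfv0 : fv S u0 = 0 :=
      congrArg Subtype.val ((S.1.orderIsoOfFin S.2).apply_symm_apply ⟨0, hmem0⟩)
    have hfvm : ∀ m, fv S (um m) = (fw I m).succ := fun m =>
      congrArg Subtype.val ((S.1.orderIsoOfFin S.2).apply_symm_apply ⟨(fw I m).succ, hmemm m⟩)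
    have key : ∀ u : Fin (k+1), g I (vert n (fv S u)) = 0 := by
      intro u
      have h := eval_zero_of_pullback_zero hg S u u0 um
      have h2 : (fun m => vert n (fv S (um m)) - vert n (fv S u0))
          = fun m => Pi.single (fw I m) (1:ℝ) := by
        funext m
        rw [hfvm m, hfv0, vert_succ, vert_zero, sub_zero]
      rw [h2, formEval_basis] at h
      exact h
    constructor
    · have := key u0
      rw [hfv0, vert_zero] at this
      exact this
    · intro s
      have := key (um s)
      rw [hfvm s, vert_succ] at this
      exact this
  have hvert' : ∀ I : {s : Finset (Fin n) // s.card = k}, ∀ i ∈ I.1,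
      g I (Pi.single i 1) = 0 := by
    intro I i hi
    have hfvi : fw I ((I.1.orderIsoOfFin I.2).symm ⟨i, hi⟩) = i :=
      congrArg Subtype.val ((I.1.orderIsoOfFin I.2).apply_symm_apply ⟨i, hi⟩)
    have := (hvert I).2 ((I.1.orderIsoOfFin I.2).symm ⟨i, hi⟩)
    rwa [hfvi] at this
  -- Step 2 : values at vertices not in I
  have hvert2 : ∀ I : {s : Finset (Fin n) // s.card = k}, ∀ j : Fin n, j ∉ I.1 →
      g I (Pi.single j 1) = 0 := by
    intro I j hj
    set C : Finset (Fin n) := insert j I.1 with hC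
    set S : {s : Finset (Fin (n+1)) // s.card = k+1} :=
      ⟨C.map ⟨Fin.succ, Fin.succ_injective n⟩, by
        rw [Finset.card_map, hC, Finset.card_insert_of_notMem hj, I.2]⟩ with hS
    have hmemj : j.succ ∈ S.1 :=
      Finset.mem_map.2 ⟨j, Finset.mem_insert_self _ _, rfl⟩
    have hmemm : ∀ m : Fin k, (fw I m).succ ∈ S.1 := fun m =>
      Finset.mem_map.2 ⟨fw I m, Finset.mem_insert_of_mem (fw_mem I m), rfl⟩
    set r : Fin (k+1) := (S.1.orderIsoOfFin S.2).symm ⟨j.succ, hmemj⟩ with hr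
    set um : Fin k → Fin (k+1) := fun m => (S.1.orderIsoOfFin S.2).symm ⟨(fw I m).succ, hmemm m⟩
      with hum
    have hfvr : fv S r = j.succ :=
      congrArg Subtype.val ((S.1.orderIsoOfFin S.2).apply_symm_apply ⟨j.succ, hmemj⟩)
    have hfvm : ∀ m, fv S (um m) = (fw I m).succ := fun m =>
      congrArg Subtype.val ((S.1.orderIsoOfFin S.2).apply_symm_apply ⟨(fw I m).succ, hmemm m⟩)
    have h := eval_zero_of_pullback_zero hg S r r um
    have h2 : (fun m => vert n (fv S (um m)) - vert n (fv S r))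
        = fun m => (Pi.single (fw I m) (1:ℝ) - Pi.single j 1) := by
      funext m
      rw [hfvm m, hfvr, vert_succ, vert_succ]
    rw [h2, hfvr, vert_succ] at h
    -- h : formEval g (e_j) (fun m => e_{I m} - e_j) = 0
    unfold formEval at h
    rw [Fintype.sum_eq_single I ?side] at h
    · -- the I-term is g I (e_j) * 1
      rw [dxI_eq_one _ ?hone, mul_one] at h
      · exact h
      · intro t m
        have hne : fw I t ≠ j := fun hh => hj (hh ▸ fw_mem I t)
        rw [Pi.sub_apply, Pi.single_apply, Pi.single_apply,
          if_neg hne]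
        by_cases htm : t = m
        · subst htm; simp
        · rw [if_neg (fun hh => htm (fw_inj.1 hh)), if_neg htm]
          norm_num
    · intro J hJ
      by_cases hjJ : j ∈ J.1
      · rw [hvert' J j hjJ, zero_mul]
      · have hns : ¬ J.1 ⊆ I.1 := by
          intro hsub
          exact hJ (Subtype.ext (Finset.eq_of_subset_of_card_le hsub
            (le_of_eq (I.2.trans J.2.symm))))
        obtain ⟨a, haJ, haI⟩ := Finset.not_subset.1 hns
        have haj : a ≠ j := fun hh => hjJ (hh ▸ haJ)
        rw [dxI_eq_zero _ haJ, mul_zero]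
        intro m
        rw [Pi.sub_apply, Pi.single_eq_of_ne (ne_fw_of_notMem haI m) 1,
          Pi.single_eq_of_ne haj 1, sub_zero]
  -- Conclusion using affineness
  intro I x
  obtain ⟨a, b, hab⟩ := haff I
  have hb : b = 0 := by
    have := (hvert I).1
    rw [hab 0] at this
    simpa using this
  have ha : ∀ i, a i = 0 := by
    intro i
    have hgi : g I (Pi.single i 1) = 0 := by
      by_cases hi : i ∈ I.1
      · exact hvert' I i hi
      · exact hvert2 I i hi
    rw [hab (Pi.single i 1), hb, add_zero] at hgi
    have : ∑ t, a t * (Pi.single i 1 : Fin n → ℝ) t = a i := by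
      have : ∀ t, a t * (Pi.single i 1 : Fin n → ℝ) t = if t = i then a t else 0 := by
        intro t
        rw [Pi.single_apply]
        split_ifs <;> ring
      rw [Finset.sum_congr rfl fun t _ => this t, Finset.sum_ite_eq' Finset.univ i]
      simp
    rw [this] at hgi
    exact hgi
  rw [hab x, hb]
  simp [ha]

lemma formEval_sub (f g : {s : Finset (Fin n) // s.card = k} → (Fin n → ℝ) → ℝ)
    (x : Fin n → ℝ) (v : Fin k → Fin n → ℝ) :
    formEval (fun I x => f I x - g I x) x v = formEval f x v - formEval g x v := by
  unfold formEval
  rw [← Finset.sum_sub_distrib]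
  exact Finset.sum_congr rfl fun I _ => by ring

end WhitneyUniq

/-- Main theorem: `Wc` is the unique `k`-form on the standard `n`-simplex with affine
coefficients, constant pullbacks to all `k`-faces, and prescribed integrals `⟨c, τ⟩` over
all `k`-faces `τ`. -/
theorem whitney_characterization {n k : ℕ} (hk : k ≤ n)
    (c : {s : Finset (Fin (n+1)) // s.card = k+1} → ℝ) :
    ((∀ v : Fin k → Fin n → ℝ, IsAffineFn (fun x => whitney c x v)) ∧
      ConstOnFaces (whitney c) ∧
      (∀ S : {s : Finset (Fin (n+1)) // s.card = k+1}, faceIntegral S (whitney c) = c S)) ∧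
    (∀ f : {s : Finset (Fin n) // s.card = k} → (Fin n → ℝ) → ℝ,
      (∀ I, IsAffineFn (f I)) → ConstOnFaces (formEval f) →
      (∀ S : {s : Finset (Fin (n+1)) // s.card = k+1}, faceIntegral S (formEval f) = c S) →
      ∀ x ∈ stdSimp n, ∀ v : Fin k → Fin n → ℝ, formEval f x v = whitney c x v) := by
  refine ⟨⟨whitney_isAffine c, whitney_constOnFaces c, faceIntegral_whitney c⟩, ?_⟩
  intro f haff hco hint x _ v
  have hpull := constOnFaces_cst_eq hco hint
  have hgaff : ∀ I, IsAffineFn (fun x => f I x - wCoeff c I x) := fun I =>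
    (haff I).sub (whitney_isAffine c _)
  have hgzero : ∀ S : {s : Finset (Fin (n+1)) // s.card = k+1}, ∀ y ∈ stdSimp k,
      ∀ w : Fin k → Fin k → ℝ,
      formEval (fun I x => f I x - wCoeff c I x) (facePt S y) (fun i => faceDir S (w i)) = 0 := by
    intro S y hy w
    rw [formEval_sub]
    have h1 := hpull S y hy w
    have h2 := whitney_eq_formEval c (facePt S y) (fun i => faceDir S (w i))
    linarith
  have hzero := coeff_zero_of_pullback_zero _ hgaff hgzero
  have hdiff : formEval f x v - formEval (wCoeff c) x v = 0 := by
    rw [← formEval_sub]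
    unfold formEval
    refine Finset.sum_eq_zero fun I _ => ?_
    show (f I x - wCoeff c I x) * dxI I v = 0
    rw [hzero I x, zero_mul]
  rw [whitney_eq_formEval c x v]
  linarith
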